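/- One-dimensional case of Theorem 3.4 (exponential convergence of the truncated PML problem): Assume in addition that f is continuous with support contained in [−R, R]. Then for every x ∈ [−R, R] one has û(x) − u(x) = D₁ e^{−ikx} + D₂ e^{ikx}; moreover there is an absolute constant C > 0 such that if R̂ ≤ 2 and k·σ₀·L ≥ 1, then (∫_{−R}^{R} (|û′(x) − u′(x)|² + k² |û(x) − u(x)|²) dx)^{1/2} ≤ C k e^{−2kσ₀L} (|u(R)|² + |u(−R)|²)^{1/2}. -/

import Mathlib

set_option maxHeartbeats 1000000


open MeasureTheory intervalIntegral

noncomputable section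

/-- The complex coordinate stretching `t̃`: `t̃ = t` for `|t| ≤ R` and
`t̃ = t + i σ₀ sgn(t)(|t| − R)` for `|t| > R`. -/
def stretch (σ₀ R t : ℝ) : ℂ :=
  if |t| ≤ R then (t : ℂ) else (t : ℂ) + Complex.I * σ₀ * (Real.sign t * (|t| - R))

/-- `R̂̃ = R̂ + i σ₀ L` where `L = R̂ − R`. -/
def Rtil (σ₀ R Rh : ℝ) : ℂ := (Rh : ℂ) + Complex.I * σ₀ * ((Rh : ℂ) - R)

/-- `J₁ = ∫_{−R̂}^{R̂} e^{−ik t̃(t)} f(t) dt`. -/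
def J1 (k σ₀ R Rh : ℝ) (f : ℝ → ℂ) : ℂ :=
  ∫ t in (-Rh)..Rh, Complex.exp (-(Complex.I * k * stretch σ₀ R t)) * f t

/-- `J₂ = ∫_{−R̂}^{R̂} e^{ik t̃(t)} f(t) dt`. -/
def J2 (k σ₀ R Rh : ℝ) (f : ℝ → ℂ) : ℂ :=
  ∫ t in (-Rh)..Rh, Complex.exp (Complex.I * k * stretch σ₀ R t) * f t

/-- `D₁ = (1/(2ik))(e^{2ik R̂̃} J₂ − J₁)/(e^{2ik R̂̃} − e^{−2ik R̂̃})`. -/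
def D1 (k σ₀ R Rh : ℝ) (f : ℝ → ℂ) : ℂ :=
  (1 / (2 * Complex.I * k)) *
    (Complex.exp (2 * Complex.I * k * Rtil σ₀ R Rh) * J2 k σ₀ R Rh f - J1 k σ₀ R Rh f) /
      (Complex.exp (2 * Complex.I * k * Rtil σ₀ R Rh) -
        Complex.exp (-(2 * Complex.I * k * Rtil σ₀ R Rh)))

/-- `D₂ = (1/(2ik))(e^{2ik R̂̃} J₁ − J₂)/(e^{2ik R̂̃} − e^{−2ik R̂̃})`. -/
def D2 (k σ₀ R Rh : ℝ) (f : ℝ → ℂ) : ℂ :=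
  (1 / (2 * Complex.I * k)) *
    (Complex.exp (2 * Complex.I * k * Rtil σ₀ R Rh) * J1 k σ₀ R Rh f - J2 k σ₀ R Rh f) /
      (Complex.exp (2 * Complex.I * k * Rtil σ₀ R Rh) -
        Complex.exp (-(2 * Complex.I * k * Rtil σ₀ R Rh)))

/-- The truncated PML solution `û` in one dimension. -/
def uhat (k σ₀ R Rh : ℝ) (f : ℝ → ℂ) (x : ℝ) : ℂ :=
  -(1 / (2 * Complex.I * k)) * Complex.exp (-(Complex.I * k * stretch σ₀ R x)) *
      (∫ t in x..Rh, Complex.exp (Complex.I * k * stretch σ₀ R t) * f t)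
    - (1 / (2 * Complex.I * k)) * Complex.exp (Complex.I * k * stretch σ₀ R x) *
      (∫ t in (-Rh)..x, Complex.exp (-(Complex.I * k * stretch σ₀ R t)) * f t)
    + D1 k σ₀ R Rh f * Complex.exp (-(Complex.I * k * stretch σ₀ R x))
    + D2 k σ₀ R Rh f * Complex.exp (Complex.I * k * stretch σ₀ R x)


/-- The exact outgoing solution of the one-dimensional Helmholtz problem:
`u(x) = −(1/(2ik)) e^{−ikx} ∫_x^∞ e^{ikt} f(t) dt − (1/(2ik)) e^{ikx} ∫_{−∞}^x e^{−ikt} f(t) dt`. -/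
def usol (k : ℝ) (f : ℝ → ℂ) (x : ℝ) : ℂ :=
  -(1 / (2 * Complex.I * k)) * Complex.exp (-(Complex.I * k * x)) *
      (∫ t in Set.Ioi x, Complex.exp (Complex.I * k * t) * f t)
    - (1 / (2 * Complex.I * k)) * Complex.exp (Complex.I * k * x) *
      (∫ t in Set.Iio x, Complex.exp (-(Complex.I * k * t)) * f t)

/-! ### Auxiliary lemmas -/

lemma stretch_eq_self {σ₀ R t : ℝ} (h : |t| ≤ R) : stretch σ₀ R t = t := if_pos h

lemma ker_eq {R : ℝ} {f : ℝ → ℂ} (hsupp : Function.support f ⊆ Set.Icc (-R) R)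
    (σ₀ : ℝ) (a : ℂ) (t : ℝ) :
    Complex.exp (a * stretch σ₀ R t) * f t = Complex.exp (a * t) * f t := by
  by_cases hf : f t = 0
  · simp [hf]
  · have ht : t ∈ Set.Icc (-R) R := hsupp hf
    rw [stretch_eq_self (abs_le.mpr ⟨ht.1, ht.2⟩)]

lemma integral_Ioi_eq {g : ℝ → ℂ} (hint : Integrable g) {b x : ℝ}
    (hz : ∀ t, b < t → g t = 0) (hx : x ≤ b) :
    ∫ t in Set.Ioi x, g t = ∫ t in x..b, g t := by
  rw [intervalIntegral.integral_of_le hx, ← Set.Ioc_union_Ioi_eq_Ioi hx,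
    setIntegral_union (Set.Ioc_disjoint_Ioi le_rfl) measurableSet_Ioi
      hint.integrableOn hint.integrableOn]
  rw [setIntegral_eq_zero_of_forall_eq_zero (fun t (ht : t ∈ Set.Ioi b) => hz t ht), add_zero]

lemma integral_Iio_eq {g : ℝ → ℂ} (hint : Integrable g) {a x : ℝ}
    (hz : ∀ t, t ≤ a → g t = 0) (hx : a ≤ x) :
    ∫ t in Set.Iio x, g t = ∫ t in a..x, g t := by
  rw [intervalIntegral.integral_of_le hx, setIntegral_congr_set Iio_ae_eq_Iic,
    ← Set.Iic_union_Ioc_eq_Iic hx,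
    setIntegral_union (Set.Iic_disjoint_Ioc le_rfl) measurableSet_Ioc
      hint.integrableOn hint.integrableOn]
  rw [setIntegral_eq_zero_of_forall_eq_zero (fun t (ht : t ∈ Set.Iic a) => hz t ht), zero_add]

lemma norm_exp_I_mul (k x : ℝ) : ‖Complex.exp (Complex.I * k * x)‖ = 1 := by
  rw [Complex.norm_exp]; simp [Complex.mul_re]

lemma norm_exp_neg_I_mul (k x : ℝ) : ‖Complex.exp (-(Complex.I * k * x))‖ = 1 := by
  rw [Complex.norm_exp]; simp [Complex.mul_re]

lemma norm_c (k : ℝ) (hk : 0 < k) : ‖(1 / (2 * Complex.I * k) : ℂ)‖ = 1 / (2 * k) := by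
  rw [norm_div, norm_one, norm_mul, norm_mul, Complex.norm_I, Complex.norm_real,
    Real.norm_eq_abs, abs_of_pos hk]
  norm_num

lemma hasDerivAt_cexp_I (a : ℂ) (x : ℝ) :
    HasDerivAt (fun x : ℝ => Complex.exp (a * x)) (a * Complex.exp (a * x)) x := by
  have h1 : HasDerivAt (fun x : ℝ => (a * x : ℂ)) a x := by
    simpa using (Complex.ofRealCLM.hasDerivAt (x := x)).const_mul a
  simpa [mul_comm] using h1.cexp

lemma norm_exp_Rtil (k σ₀ R Rh : ℝ) :
    ‖Complex.exp (2 * Complex.I * k * Rtil σ₀ R Rh)‖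
      = Real.exp (-(2 * (k * σ₀ * (Rh - R)))) := by
  rw [Rtil, Complex.norm_exp]
  ring_nf
  simp [Complex.mul_re, Complex.mul_im, Complex.add_re, Complex.add_im,
    Complex.sub_re, Complex.sub_im]
  ring_nf

/-- generic bound for the `D` coefficients -/
lemma D_bound (k s : ℝ) (hk : 0 < k) (hs : 1 ≤ s) (E : ℂ)
    (hE : ‖Complex.exp E‖ = Real.exp (-(2 * s))) (JA JB : ℂ) (a b : ℝ)
    (hJA : ‖JA‖ = 2 * k * a) (hJB : ‖JB‖ = 2 * k * b) :
    ‖(1 / (2 * Complex.I * k)) * (Complex.exp E * JA - JB) /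
        (Complex.exp E - Complex.exp (-E))‖
      ≤ 2 * Real.exp (-(2 * s)) * (a + b) := by
  have ha : 0 ≤ a := by nlinarith [norm_nonneg JA]
  have hb : 0 ≤ b := by nlinarith [norm_nonneg JB]
  have hE' : ‖Complex.exp (-E)‖ = Real.exp (2 * s) := by
    rw [Complex.exp_neg, norm_inv, hE, ← Real.exp_neg, neg_neg]
  have hexp2 : (2 : ℝ) ≤ Real.exp (2 * s) := by
    have := Real.add_one_le_exp (2 * s)
    linarith
  have hden : Real.exp (2 * s) / 2 ≤ ‖Complex.exp E - Complex.exp (-E)‖ := by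
    have h1 : ‖Complex.exp (-E)‖ - ‖Complex.exp E‖ ≤ ‖Complex.exp (-E) - Complex.exp E‖ :=
      norm_sub_norm_le _ _
    rw [norm_sub_rev] at h1
    rw [hE, hE'] at h1
    rw [Real.exp_neg] at h1
    nlinarith [Real.exp_pos (2 * s), mul_inv_cancel₀ (Real.exp_pos (2 * s)).ne',
      inv_nonneg.mpr (Real.exp_pos (2 * s)).le]
  have hnum : ‖(1 / (2 * Complex.I * k)) * (Complex.exp E * JA - JB)‖ ≤ a + b := by
    rw [norm_mul, norm_c k hk]
    have h3 : ‖Complex.exp E * JA - JB‖ ≤ ‖JA‖ + ‖JB‖ := by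
      calc ‖Complex.exp E * JA - JB‖ ≤ ‖Complex.exp E * JA‖ + ‖JB‖ := norm_sub_le _ _
        _ ≤ ‖JA‖ + ‖JB‖ := by
            rw [norm_mul, hE]
            have : Real.exp (-(2 * s)) ≤ 1 := by
              rw [Real.exp_le_one_iff]; linarith
            nlinarith [norm_nonneg JA]
    rw [hJA, hJB] at h3
    calc 1 / (2 * k) * ‖Complex.exp E * JA - JB‖
        ≤ 1 / (2 * k) * (2 * k * a + 2 * k * b) := by
          apply mul_le_mul_of_nonneg_left h3; positivity
      _ = a + b := by field_simp
  rw [norm_div]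
  calc ‖(1 / (2 * Complex.I * k)) * (Complex.exp E * JA - JB)‖ /
        ‖Complex.exp E - Complex.exp (-E)‖
      ≤ (a + b) / (Real.exp (2 * s) / 2) := by
        apply div_le_div₀ (by positivity) hnum (by positivity) hden
    _ = 2 * Real.exp (-(2 * s)) * (a + b) := by
        rw [Real.exp_neg]; field_simp

def Vfun (k Rh : ℝ) (f : ℝ → ℂ) (x : ℝ) : ℂ :=
  -(1 / (2 * Complex.I * k)) * Complex.exp (-(Complex.I * k * x)) *
      (∫ t in x..Rh, Complex.exp (Complex.I * k * t) * f t)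
    - (1 / (2 * Complex.I * k)) * Complex.exp (Complex.I * k * x) *
      (∫ t in (-Rh)..x, Complex.exp (-(Complex.I * k * t)) * f t)

def Gfun (k σ₀ R Rh : ℝ) (f : ℝ → ℂ) (x : ℝ) : ℂ :=
  D1 k σ₀ R Rh f * Complex.exp (-(Complex.I * k * x)) +
    D2 k σ₀ R Rh f * Complex.exp (Complex.I * k * x)

/-- One-dimensional case of Theorem 3.4 (exponential convergence of the truncated PML
problem): if `f` is continuous with support contained in `[−R, R]` then on `[−R, R]` one has
`û − u = D₁ e^{−ikx} + D₂ e^{ikx}`, and there is an absolute constant `C > 0` such that if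
`R̂ ≤ 2` and `k σ₀ L ≥ 1` then
`(∫_{−R}^{R} (|û′−u′|² + k²|û−u|²))^{1/2} ≤ C k e^{−2kσ₀L} (|u(R)|² + |u(−R)|²)^{1/2}`. -/
theorem pml_convergence_1d :
    ∃ C : ℝ, 0 < C ∧
      ∀ (k σ₀ R Rh : ℝ) (f : ℝ → ℂ),
        0 < k → 0 < σ₀ → 0 < R → R < Rh →
        Continuous f → Function.support f ⊆ Set.Icc (-R) R →
        (∀ x ∈ Set.Icc (-R) R,
          uhat k σ₀ R Rh f x - usol k f x =
            D1 k σ₀ R Rh f * Complex.exp (-(Complex.I * k * x)) +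
              D2 k σ₀ R Rh f * Complex.exp (Complex.I * k * x)) ∧
        (Rh ≤ 2 → 1 ≤ k * σ₀ * (Rh - R) →
          Real.sqrt (∫ x in (-R)..R,
              (‖deriv (uhat k σ₀ R Rh f) x - deriv (usol k f) x‖ ^ 2 +
                k ^ 2 * ‖uhat k σ₀ R Rh f x - usol k f x‖ ^ 2)) ≤
            C * k * Real.exp (-2 * k * σ₀ * (Rh - R)) *
              Real.sqrt (‖usol k f R‖ ^ 2 + ‖usol k f (-R)‖ ^ 2)) := by
  refine ⟨12, by norm_num, ?_⟩
  intro k σ₀ R Rh f hk hσ hR hRRh hf hsupp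
  -- basic kernel facts
  have hcontp : Continuous fun t : ℝ => Complex.exp (Complex.I * k * t) * f t := by
    exact (Complex.continuous_exp.comp (by continuity)).mul hf
  have hcontm : Continuous fun t : ℝ => Complex.exp (-(Complex.I * k * t)) * f t := by
    exact (Complex.continuous_exp.comp (by continuity)).mul hf
  have hcsf : HasCompactSupport f :=
    HasCompactSupport.of_support_subset_isCompact isCompact_Icc hsupp
  have hintp : Integrable fun t : ℝ => Complex.exp (Complex.I * k * t) * f t :=
    hcontp.integrable_of_hasCompactSupport
      (hcsf.mono (Function.support_mul_subset_right _ _))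
  have hintm : Integrable fun t : ℝ => Complex.exp (-(Complex.I * k * t)) * f t :=
    hcontm.integrable_of_hasCompactSupport
      (hcsf.mono (Function.support_mul_subset_right _ _))
  have hfz : ∀ t : ℝ, R < |t| → f t = 0 := by
    intro t ht
    by_contra h
    have h2 := hsupp h
    rw [Set.mem_Icc, ← abs_le] at h2
    linarith
  have hzp : ∀ t : ℝ, R < |t| → Complex.exp (Complex.I * k * t) * f t = 0 := by
    intro t ht; rw [hfz t ht, mul_zero]
  have hzm : ∀ t : ℝ, R < |t| → Complex.exp (-(Complex.I * k * t)) * f t = 0 := by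
    intro t ht; rw [hfz t ht, mul_zero]
  -- usol = Vfun on [-R, R]
  have husol : ∀ x ∈ Set.Icc (-R) R, usol k f x = Vfun k Rh f x := by
    intro x hx
    rw [usol, Vfun,
      integral_Ioi_eq (b := Rh) hintp
        (fun t ht => hzp t (lt_of_lt_of_le (by linarith) (le_abs_self t))) (by linarith [hx.2]),
      integral_Iio_eq (a := -Rh) hintm
        (fun t ht => hzm t (lt_of_lt_of_le (by linarith) (neg_le_abs t))) (by linarith [hx.1])]
  -- uhat = Vfun + Gfun on [-R, R]
  have huhat : ∀ x ∈ Set.Icc (-R) R,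
      uhat k σ₀ R Rh f x = Vfun k Rh f x + Gfun k σ₀ R Rh f x := by
    intro x hx
    have e1 : (∫ t in x..Rh, Complex.exp (Complex.I * k * stretch σ₀ R t) * f t)
        = ∫ t in x..Rh, Complex.exp (Complex.I * k * t) * f t :=
      intervalIntegral.integral_congr fun t _ => ker_eq hsupp σ₀ _ t
    have e2 : (∫ t in (-Rh)..x, Complex.exp (-(Complex.I * k * stretch σ₀ R t)) * f t)
        = ∫ t in (-Rh)..x, Complex.exp (-(Complex.I * k * t)) * f t :=
      intervalIntegral.integral_congr fun t _ => by
        simpa [neg_mul] using ker_eq hsupp σ₀ (-(Complex.I * k)) t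
    rw [uhat, e1, e2, stretch_eq_self (abs_le.mpr ⟨hx.1, hx.2⟩), Vfun, Gfun]
    ring
  -- part 1
  have part1 : ∀ x ∈ Set.Icc (-R) R,
      uhat k σ₀ R Rh f x - usol k f x =
        D1 k σ₀ R Rh f * Complex.exp (-(Complex.I * k * x)) +
          D2 k σ₀ R Rh f * Complex.exp (Complex.I * k * x) := by
    intro x hx
    rw [huhat x hx, husol x hx, Gfun]
    ring
  refine ⟨part1, ?_⟩
  intro hRh2 hs1
  -- J1 and J2 in terms of usol
  have hJ1 : J1 k σ₀ R Rh f = ∫ t in Set.Iio R, Complex.exp (-(Complex.I * k * t)) * f t := by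
    rw [J1]
    have e2 : (∫ t in (-Rh)..Rh, Complex.exp (-(Complex.I * k * stretch σ₀ R t)) * f t)
        = ∫ t in (-Rh)..Rh, Complex.exp (-(Complex.I * k * t)) * f t :=
      intervalIntegral.integral_congr fun t _ => by
        simpa [neg_mul] using ker_eq hsupp σ₀ (-(Complex.I * k)) t
    rw [e2,
      integral_Iio_eq (a := -Rh) hintm
        (fun t ht => hzm t (lt_of_lt_of_le (by linarith) (neg_le_abs t))) (by linarith),
      ← intervalIntegral.integral_add_adjacent_intervals (b := R)
        hintm.intervalIntegrable hintm.intervalIntegrable]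
    have h0 : (∫ t in R..Rh, Complex.exp (-(Complex.I * k * t)) * f t) = 0 := by
      rw [intervalIntegral.integral_of_le (le_of_lt hRRh)]
      exact setIntegral_eq_zero_of_forall_eq_zero fun t ht =>
        hzm t (lt_of_lt_of_le ht.1 (le_abs_self t))
    rw [h0, add_zero]
  have hJ2 : J2 k σ₀ R Rh f = ∫ t in Set.Ioi (-R), Complex.exp (Complex.I * k * t) * f t := by
    rw [J2]
    have e1 : (∫ t in (-Rh)..Rh, Complex.exp (Complex.I * k * stretch σ₀ R t) * f t)
        = ∫ t in (-Rh)..Rh, Complex.exp (Complex.I * k * t) * f t :=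
      intervalIntegral.integral_congr fun t _ => ker_eq hsupp σ₀ _ t
    rw [e1,
      integral_Ioi_eq (b := Rh) hintp
        (fun t ht => hzp t (lt_of_lt_of_le (by linarith) (le_abs_self t))) (by linarith),
      ← intervalIntegral.integral_add_adjacent_intervals (b := -R)
        hintp.intervalIntegrable hintp.intervalIntegrable]
    have h0 : (∫ t in (-Rh)..(-R), Complex.exp (Complex.I * k * t) * f t) = 0 := by
      rw [intervalIntegral.integral_of_le (by linarith),
        setIntegral_congr_set (Ioo_ae_eq_Ioc (α := ℝ) (a := -Rh) (b := -R)).symm]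
      exact setIntegral_eq_zero_of_forall_eq_zero fun t ht =>
        hzp t (lt_of_lt_of_le (by linarith [ht.2]) (neg_le_abs t))
    rw [h0, zero_add]
  -- norms of J1, J2
  have hJ1n : ‖J1 k σ₀ R Rh f‖ = 2 * k * ‖usol k f R‖ := by
    have hUR : usol k f R =
        -(1 / (2 * Complex.I * k)) * Complex.exp (Complex.I * k * R) * J1 k σ₀ R Rh f := by
      rw [usol, hJ1]
      have h0 : (∫ t in Set.Ioi (R : ℝ), Complex.exp (Complex.I * k * t) * f t) = 0 :=
        setIntegral_eq_zero_of_forall_eq_zero fun t ht =>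
          hzp t (lt_of_lt_of_le ht (le_abs_self t))
      rw [h0]
      ring
    rw [hUR, norm_mul, norm_mul, norm_neg, norm_c k hk, norm_exp_I_mul]
    field_simp
  have hJ2n : ‖J2 k σ₀ R Rh f‖ = 2 * k * ‖usol k f (-R)‖ := by
    have hUR : usol k f (-R) =
        -(1 / (2 * Complex.I * k)) * Complex.exp (-(Complex.I * k * (-R : ℝ))) *
          J2 k σ₀ R Rh f := by
      rw [usol, hJ2]
      have h0 : (∫ t in Set.Iio (-R : ℝ), Complex.exp (-(Complex.I * k * t)) * f t) = 0 :=
        setIntegral_eq_zero_of_forall_eq_zero fun t ht =>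
          hzm t (lt_of_lt_of_le (by linarith [Set.mem_Iio.mp ht]) (neg_le_abs t))
      rw [h0]
      ring
    rw [hUR, norm_mul, norm_mul, norm_neg, norm_c k hk, norm_exp_neg_I_mul]
    field_simp
  -- the bound on D1 and D2
  set s : ℝ := k * σ₀ * (Rh - R) with hsdef
  set S : ℝ := ‖usol k f R‖ + ‖usol k f (-R)‖ with hSdef
  have hD1 : ‖D1 k σ₀ R Rh f‖ ≤ 2 * Real.exp (-(2 * s)) * S := by
    have := D_bound k s hk hs1 (2 * Complex.I * k * Rtil σ₀ R Rh)
      (by rw [norm_exp_Rtil]) (J2 k σ₀ R Rh f) (J1 k σ₀ R Rh f)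
      (‖usol k f (-R)‖) (‖usol k f R‖) hJ2n hJ1n
    rw [D1]
    calc ‖(1 / (2 * Complex.I * ↑k)) *
          (Complex.exp (2 * Complex.I * ↑k * Rtil σ₀ R Rh) * J2 k σ₀ R Rh f - J1 k σ₀ R Rh f) /
          (Complex.exp (2 * Complex.I * ↑k * Rtil σ₀ R Rh) -
            Complex.exp (-(2 * Complex.I * ↑k * Rtil σ₀ R Rh)))‖
        ≤ 2 * Real.exp (-(2 * s)) * (‖usol k f (-R)‖ + ‖usol k f R‖) := this
      _ = 2 * Real.exp (-(2 * s)) * S := by rw [hSdef]; ring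
  have hD2 : ‖D2 k σ₀ R Rh f‖ ≤ 2 * Real.exp (-(2 * s)) * S := by
    have := D_bound k s hk hs1 (2 * Complex.I * k * Rtil σ₀ R Rh)
      (by rw [norm_exp_Rtil]) (J1 k σ₀ R Rh f) (J2 k σ₀ R Rh f)
      (‖usol k f R‖) (‖usol k f (-R)‖) hJ1n hJ2n
    rw [D2]
    exact this
  -- derivative difference
  have hE1 : ∀ x : ℝ, HasDerivAt (fun y : ℝ => Complex.exp (-(Complex.I * k * y)))
      (-(Complex.I * k) * Complex.exp (-(Complex.I * k * x))) x := by
    intro x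
    simpa [neg_mul] using hasDerivAt_cexp_I (-(Complex.I * k)) x
  have hE2 : ∀ x : ℝ, HasDerivAt (fun y : ℝ => Complex.exp (Complex.I * k * y))
      (Complex.I * k * Complex.exp (Complex.I * k * x)) x := fun x =>
    hasDerivAt_cexp_I (Complex.I * k) x
  have hGd : ∀ x : ℝ, HasDerivAt (Gfun k σ₀ R Rh f)
      (D1 k σ₀ R Rh f * (-(Complex.I * k) * Complex.exp (-(Complex.I * k * x))) +
        D2 k σ₀ R Rh f * (Complex.I * k * Complex.exp (Complex.I * k * x))) x := by
    intro x
    exact ((hE1 x).const_mul _).add ((hE2 x).const_mul _)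
  have hVdiff : ∀ x : ℝ, DifferentiableAt ℝ (Vfun k Rh f) x := by
    intro x
    have hF : HasDerivAt (fun y : ℝ => ∫ t in y..Rh, Complex.exp (Complex.I * k * t) * f t)
        (-(Complex.exp (Complex.I * k * x) * f x)) x :=
      intervalIntegral.integral_hasDerivAt_left hintp.intervalIntegrable
        (hcontp.stronglyMeasurableAtFilter _ _) hcontp.continuousAt
    have hG : HasDerivAt (fun y : ℝ => ∫ t in (-Rh)..y, Complex.exp (-(Complex.I * k * t)) * f t)
        (Complex.exp (-(Complex.I * k * x)) * f x) x :=
      intervalIntegral.integral_hasDerivAt_right hintm.intervalIntegrable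
        (hcontm.stronglyMeasurableAtFilter _ _) hcontm.continuousAt
    exact ((((differentiableAt_const _).mul (hE1 x).differentiableAt).mul
      hF.differentiableAt).sub (((differentiableAt_const _).mul
      (hE2 x).differentiableAt).mul hG.differentiableAt))
  have hderiv : ∀ x ∈ Set.Ioo (-R) R,
      deriv (uhat k σ₀ R Rh f) x - deriv (usol k f) x =
        D1 k σ₀ R Rh f * (-(Complex.I * k) * Complex.exp (-(Complex.I * k * x))) +
          D2 k σ₀ R Rh f * (Complex.I * k * Complex.exp (Complex.I * k * x)) := by
    intro x hx
    have hmem : Set.Ioo (-R) R ∈ nhds x := isOpen_Ioo.mem_nhds hx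
    have heq1 : uhat k σ₀ R Rh f =ᶠ[nhds x]
        fun y => Vfun k Rh f y + Gfun k σ₀ R Rh f y :=
      Filter.eventuallyEq_of_mem hmem fun y hy =>
        huhat y ⟨le_of_lt hy.1, le_of_lt hy.2⟩
    have heq2 : usol k f =ᶠ[nhds x] Vfun k Rh f :=
      Filter.eventuallyEq_of_mem hmem fun y hy =>
        husol y ⟨le_of_lt hy.1, le_of_lt hy.2⟩
    rw [heq1.deriv_eq, heq2.deriv_eq,
      deriv_fun_add (hVdiff x) (hGd x).differentiableAt, (hGd x).deriv]
    ring
  -- pointwise value of the integrand on the open interval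
  have hpt : ∀ x ∈ Set.Ioo (-R) R,
      (‖deriv (uhat k σ₀ R Rh f) x - deriv (usol k f) x‖ ^ 2 +
        k ^ 2 * ‖uhat k σ₀ R Rh f x - usol k f x‖ ^ 2) =
      2 * k ^ 2 * (‖D1 k σ₀ R Rh f‖ ^ 2 + ‖D2 k σ₀ R Rh f‖ ^ 2) := by
    intro x hx
    have hx' : x ∈ Set.Icc (-R) R := ⟨le_of_lt hx.1, le_of_lt hx.2⟩
    rw [hderiv x hx, part1 x hx']
    set A : ℂ := D1 k σ₀ R Rh f * Complex.exp (-(Complex.I * k * x)) with hA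
    set B : ℂ := D2 k σ₀ R Rh f * Complex.exp (Complex.I * k * x) with hB
    have hval : D1 k σ₀ R Rh f * (-(Complex.I * k) * Complex.exp (-(Complex.I * k * x))) +
        D2 k σ₀ R Rh f * (Complex.I * k * Complex.exp (Complex.I * k * x)) =
        (Complex.I * k) * (B - A) := by rw [hA, hB]; ring
    rw [hval, norm_mul]
    have hIk : ‖Complex.I * (k : ℂ)‖ = k := by
      rw [norm_mul, Complex.norm_I, Complex.norm_real, Real.norm_eq_abs, abs_of_pos hk, one_mul]
    rw [hIk, norm_sub_rev]
    have hAn : ‖A‖ = ‖D1 k σ₀ R Rh f‖ := by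
      rw [hA, norm_mul, norm_exp_neg_I_mul, mul_one]
    have hBn : ‖B‖ = ‖D2 k σ₀ R Rh f‖ := by
      rw [hB, norm_mul, norm_exp_I_mul, mul_one]
    have par := parallelogram_law_with_norm ℝ A B
    rw [← hAn, ← hBn]
    linear_combination (k:ℝ)^2 * par
  -- evaluate the integral
  have hInt : (∫ x in (-R)..R,
      (‖deriv (uhat k σ₀ R Rh f) x - deriv (usol k f) x‖ ^ 2 +
        k ^ 2 * ‖uhat k σ₀ R Rh f x - usol k f x‖ ^ 2)) =
      (2 * R) * (2 * k ^ 2 * (‖D1 k σ₀ R Rh f‖ ^ 2 + ‖D2 k σ₀ R Rh f‖ ^ 2)) := by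
    rw [intervalIntegral.integral_of_le (by linarith),
      setIntegral_congr_set (Ioo_ae_eq_Ioc (α := ℝ) (a := -R) (b := R)).symm,
      setIntegral_congr_fun measurableSet_Ioo hpt, setIntegral_const, smul_eq_mul,
      Real.volume_real_Ioo_of_le (by linarith)]
    ring_nf
  rw [hInt]
  -- final numeric estimate
  set T : ℝ := Real.sqrt (‖usol k f R‖ ^ 2 + ‖usol k f (-R)‖ ^ 2) with hTdef
  have hT0 : 0 ≤ T := Real.sqrt_nonneg _
  have hT2 : T ^ 2 = ‖usol k f R‖ ^ 2 + ‖usol k f (-R)‖ ^ 2 :=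
    Real.sq_sqrt (by positivity)
  have hS2 : S ^ 2 ≤ 2 * T ^ 2 := by
    rw [hT2, hSdef]
    nlinarith [sq_nonneg (‖usol k f R‖ - ‖usol k f (-R)‖)]
  have hexps : Real.exp (-2 * k * σ₀ * (Rh - R)) = Real.exp (-(2 * s)) := by
    rw [hsdef]; ring_nf
  rw [hexps]
  set es : ℝ := Real.exp (-(2 * s)) with hesdef
  have hes0 : 0 < es := Real.exp_pos _
  have hS0 : 0 ≤ S := by rw [hSdef]; positivity
  have hD1sq : ‖D1 k σ₀ R Rh f‖ ^ 2 ≤ (2 * es * S) ^ 2 :=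
    pow_le_pow_left₀ (norm_nonneg _) hD1 2
  have hD2sq : ‖D2 k σ₀ R Rh f‖ ^ 2 ≤ (2 * es * S) ^ 2 :=
    pow_le_pow_left₀ (norm_nonneg _) hD2 2
  have hfinal : (2 * R) * (2 * k ^ 2 * (‖D1 k σ₀ R Rh f‖ ^ 2 + ‖D2 k σ₀ R Rh f‖ ^ 2))
      ≤ (12 * k * es * T) ^ 2 := by
    have hR2 : R ≤ 2 := by linarith
    have hM0 : (0:ℝ) ≤ ‖D1 k σ₀ R Rh f‖ ^ 2 + ‖D2 k σ₀ R Rh f‖ ^ 2 := by positivity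
    have hsum : ‖D1 k σ₀ R Rh f‖ ^ 2 + ‖D2 k σ₀ R Rh f‖ ^ 2 ≤ 16 * es ^ 2 * T ^ 2 := by
      nlinarith [hD1sq, hD2sq, mul_le_mul_of_nonneg_left hS2 (sq_nonneg es)]
    nlinarith [mul_le_mul_of_nonneg_left hsum (sq_nonneg k),
      mul_le_mul_of_nonneg_right hR2 (mul_nonneg (sq_nonneg k) hM0),
      mul_nonneg (sq_nonneg k) hM0,
      mul_nonneg (mul_nonneg (sq_nonneg k) (sq_nonneg es)) (sq_nonneg T)]
  calc Real.sqrt ((2 * R) * (2 * k ^ 2 * (‖D1 k σ₀ R Rh f‖ ^ 2 + ‖D2 k σ₀ R Rh f‖ ^ 2)))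
      ≤ Real.sqrt ((12 * k * es * T) ^ 2) := Real.sqrt_le_sqrt hfinal
    _ = 12 * k * es * T := Real.sqrt_sq (by positivity)

end
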